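/- arXiv:1306.6525 — 2 statements merged into one kernel-verified Lean document; each statement's English description precedes it below -/
import Mathlib

section
/- Let Φ be a linear map from matrices on ℂ^{a}⊗ℂ^{b} to matrices on ℂ^{a'}⊗ℂ^{b'}, with Choi matrix Ω_Φ on (ℂ^{a'}⊗ℂ^{b'}) ⊗ (ℂ^{a}⊗ℂ^{b}). Suppose Ω_Φ is a finite nonnegative combination of operators of the two following forms: (I) the image under the canonical permutation of tensor factors (A, A'B', B) → (A, B, A'B') of ζ ⊗ ρ, where ζ is an operator on ℂ^{a'} ⊗ (ℂ^{a}⊗ℂ^{b}) block-positive w.r.t. the cut a'|(ab) and ρ is a positive semidefinite b'×b' matrix; (II) the image under the canonical permutation of tensor factors (A, B, A'B') ordering of ρ' ⊗ ζ', where ρ' is a positive semidefinite a'×a' matrix and ζ' is an operator on ℂ^{b'} ⊗ (ℂ^{a}⊗ℂ^{b}) block-positive w.r.t. the cut b'|(ab). Then Φ is positive entanglement-annihilating (PEA) w.r.t. the output cut A|B. -/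
open Matrix Kronecker ComplexOrder BigOperators

namespace PaperEA

noncomputable section

/-- A matrix on a bipartite space is *separable* w.r.t. the cut `m|n` if it is a finite
sum of Kronecker products of positive semidefinite matrices. -/
def Sep {m n : Type*} [Fintype m] [Fintype n]
    (M : Matrix (m × n) (m × n) ℂ) : Prop :=
  ∃ (k : ℕ) (σ : Fin k → Matrix m m ℂ) (τ : Fin k → Matrix n n ℂ),
    (∀ i, (σ i).PosSemidef) ∧ (∀ i, (τ i).PosSemidef) ∧ M = ∑ i, σ i ⊗ₖ τ i

/-- Density matrix: positive semidefinite with unit trace. -/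
def IsDensity {m : Type*} [Fintype m] (ρ : Matrix m m ℂ) : Prop :=
  ρ.PosSemidef ∧ ρ.trace = 1

/-- A map on matrices is positive if it maps positive semidefinite matrices to
positive semidefinite matrices. -/
def IsPosMap {m n : Type*} [Fintype m] [Fintype n]
    (Φ : Matrix m m ℂ → Matrix n n ℂ) : Prop :=
  ∀ X : Matrix m m ℂ, X.PosSemidef → (Φ X).PosSemidef

/-- Choi matrix `(Φ ⊗ Id)[|Ψ+⟩⟨Ψ+|]` of a map `Φ` from `m×m` matrices to `n×n` matrices;
its entry at `((x,k),(y,l))` is `card m⁻¹ * Φ(|k⟩⟨l|) x y`. -/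
def choi {m n : Type*} [Fintype m] [DecidableEq m] [Fintype n]
    (Φ : Matrix m m ℂ → Matrix n n ℂ) : Matrix (n × m) (n × m) ℂ :=
  fun p q => (Fintype.card m : ℂ)⁻¹ * Φ (single p.2 q.2 1) p.1 q.1

/-- Trace-preserving map. -/
def IsTP {m n : Type*} [Fintype m] [Fintype n]
    (Φ : Matrix m m ℂ → Matrix n n ℂ) : Prop :=
  ∀ X : Matrix m m ℂ, (Φ X).trace = X.trace

/-- Completely positive map: positive semidefinite Choi matrix. -/
def IsCP {m n : Type*} [Fintype m] [DecidableEq m] [Fintype n]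
    (Φ : Matrix m m ℂ → Matrix n n ℂ) : Prop :=
  (choi Φ).PosSemidef

/-- Channel: completely positive and trace-preserving. -/
def IsChannel {m n : Type*} [Fintype m] [DecidableEq m] [Fintype n]
    (Φ : Matrix m m ℂ → Matrix n n ℂ) : Prop :=
  IsCP Φ ∧ IsTP Φ

/-- Entanglement-breaking: separable Choi matrix (output|input cut). -/
def IsEB {m n : Type*} [Fintype m] [DecidableEq m] [Fintype n]
    (Φ : Matrix m m ℂ → Matrix n n ℂ) : Prop :=
  Sep (choi Φ)

/-- Entanglement-breaking channel. -/
def IsEBChannel {m n : Type*} [Fintype m] [DecidableEq m] [Fintype n]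
    (Φ : Matrix m m ℂ → Matrix n n ℂ) : Prop :=
  IsChannel Φ ∧ IsEB Φ

/-- Entanglement-annihilating map: every density matrix is sent to a matrix separable
w.r.t. the output cut `A'|B'`. -/
def IsEA {A B A' B' : Type*} [Fintype A] [Fintype B] [Fintype A'] [Fintype B']
    (Φ : Matrix (A × B) (A × B) ℂ → Matrix (A' × B') (A' × B') ℂ) : Prop :=
  ∀ ρ : Matrix (A × B) (A × B) ℂ, IsDensity ρ → Sep (Φ ρ)

/-- Positive entanglement-annihilating map. -/
def IsPEA {A B A' B' : Type*} [Fintype A] [Fintype B] [Fintype A'] [Fintype B']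
    (Φ : Matrix (A × B) (A × B) ℂ → Matrix (A' × B') (A' × B') ℂ) : Prop :=
  IsPosMap Φ ∧ IsEA Φ

/-- Block-positive (Hermitian) operator w.r.t. the cut `m|n`:
`⟨x⊗y| ξ |x⊗y⟩ ≥ 0` for all product vectors. -/
def BlockPositive {m n : Type*} [Fintype m] [Fintype n]
    (ξ : Matrix (m × n) (m × n) ℂ) : Prop :=
  ξ.IsHermitian ∧ ∀ (x : m → ℂ) (y : n → ℂ),
    0 ≤ star (fun p : m × n => x p.1 * y p.2) ⬝ᵥ ξ *ᵥ fun p : m × n => x p.1 * y p.2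

/-- Partial trace over the first tensor factor. -/
def ptrace1 {m n : Type*} [Fintype m] (Ω : Matrix (m × n) (m × n) ℂ) : Matrix n n ℂ :=
  fun k l => ∑ i : m, Ω (i, k) (i, l)

/-- Partial transpose w.r.t. the first tensor factor. -/
def ptrans1 {m n : Type*} (ρ : Matrix (m × n) (m × n) ℂ) : Matrix (m × n) (m × n) ℂ :=
  fun p q => ρ (q.1, p.2) (p.1, q.2)

/-- Tensor product `Φ1 ⊗ Φ2` of (linear) maps on matrices. -/
def tensorMap {A B A' B' : Type*} [Fintype A] [DecidableEq A] [Fintype B] [DecidableEq B]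
    [Fintype A'] [Fintype B']
    (Φ1 : Matrix A A ℂ → Matrix A' A' ℂ) (Φ2 : Matrix B B ℂ → Matrix B' B' ℂ)
    (X : Matrix (A × B) (A × B) ℂ) : Matrix (A' × B') (A' × B') ℂ :=
  ∑ a1 : A, ∑ a2 : A, ∑ b1 : B, ∑ b2 : B,
    X (a1, b1) (a2, b2) • (Φ1 (single a1 a2 1) ⊗ₖ Φ2 (single b1 b2 1))

/-- Depolarizing map `Φ_q[X] = q X + (1−q) tr(X) I/d`. -/
def depolM {m : Type*} [Fintype m] [DecidableEq m] (q : ℝ)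
    (X : Matrix m m ℂ) : Matrix m m ℂ :=
  (q : ℂ) • X + ((1 - q : ℝ) : ℂ) • X.trace • (Fintype.card m : ℂ)⁻¹ • (1 : Matrix m m ℂ)

def pauli1 : Matrix (Fin 2) (Fin 2) ℂ := !![0, 1; 1, 0]
def pauli2 : Matrix (Fin 2) (Fin 2) ℂ := !![0, -Complex.I; Complex.I, 0]
def pauli3 : Matrix (Fin 2) (Fin 2) ℂ := !![1, 0; 0, -1]

/-- The unital qubit map `Υ_λ[X] = ½(tr(X) I + Σ_j λ_j tr(σ_j X) σ_j)`. -/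
def Ups (l1 l2 l3 : ℝ) (X : Matrix (Fin 2) (Fin 2) ℂ) : Matrix (Fin 2) (Fin 2) ℂ :=
  (2 : ℂ)⁻¹ • (X.trace • (1 : Matrix (Fin 2) (Fin 2) ℂ)
    + (l1 : ℂ) • (pauli1 * X).trace • pauli1
    + (l2 : ℂ) • (pauli2 * X).trace • pauli2
    + (l3 : ℂ) • (pauli3 * X).trace • pauli3)

/-- The maximally entangled unit vector `|Ψ+⟩ = d^{-1/2} Σ_i |i⟩⊗|i⟩`. -/
def maxEntVec (d : ℕ) : Fin d × Fin d → ℂ :=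
  fun p => if p.1 = p.2 then ((Real.sqrt d : ℂ))⁻¹ else 0

/-- The maximally entangled state `|Ψ+⟩⟨Ψ+|`. -/
def maxEntState (d : ℕ) : Matrix (Fin d × Fin d) (Fin d × Fin d) ℂ :=
  vecMulVec (maxEntVec d) (star (maxEntVec d))

/-- The vector `|γ⟩ = (|1⟩⊗|1⟩ + |d⟩⊗|d⟩)/√2`. -/
def gammaVec (d : ℕ) : Fin d × Fin d → ℂ :=
  fun p => if (p.1 : ℕ) = (p.2 : ℕ) ∧ ((p.1 : ℕ) = 0 ∨ (p.1 : ℕ) = d - 1)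
    then ((Real.sqrt 2 : ℂ))⁻¹ else 0

/-- The state `|γ⟩⟨γ|`. -/
def gammaState (d : ℕ) : Matrix (Fin d × Fin d) (Fin d × Fin d) ℂ :=
  vecMulVec (gammaVec d) (star (gammaVec d))

end

end PaperEA

open PaperEA

namespace PaperEA
noncomputable section
lemma psd_smul_real {m : Type*} [Fintype m] {σ : Matrix m m ℂ} (hσ : σ.PosSemidef)
    {r : ℝ} (hr : 0 ≤ r) : ((r:ℂ) • σ).PosSemidef := by
  refine Matrix.posSemidef_iff_dotProduct_mulVec.mpr ⟨?_, ?_⟩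
  · unfold Matrix.IsHermitian
    rw [Matrix.conjTranspose_smul, hσ.1]
    simp
  · intro x
    have h2 := (Matrix.posSemidef_iff_dotProduct_mulVec.mp hσ).2 x
    rw [Matrix.smul_mulVec, dotProduct_smul]
    exact mul_nonneg (Complex.zero_le_real.mpr hr) h2

lemma psd_eq_ct_mul {m : Type*} [Fintype m] {X : Matrix m m ℂ} (hX : X.PosSemidef) :
    ∃ B : Matrix m m ℂ, X = Bᴴ * B := by
  classical
  open scoped MatrixOrder in
  obtain ⟨B, hB⟩ := CStarAlgebra.nonneg_iff_eq_star_mul_self.mp hX.nonneg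
  exact ⟨B, by rw [hB, Matrix.star_eq_conjTranspose]⟩

lemma contract_psd {m n : Type*} [Fintype m] [Fintype n]
    {ζ : Matrix (m × n) (m × n) ℂ} (hζ : BlockPositive ζ)
    {X : Matrix n n ℂ} (hX : X.PosSemidef) :
    (Matrix.of fun p q : m => ∑ u : n, ∑ v : n, X u v * ζ (p,u) (q,v)).PosSemidef := by
  have hζh : ∀ p q, star (ζ q p) = ζ p q := fun p q => by
    conv_rhs => rw [← hζ.1]
    rw [Matrix.conjTranspose_apply]
  have hXh : ∀ u v, star (X v u) = X u v := fun u v => by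
    conv_rhs => rw [← hX.1]
    rw [Matrix.conjTranspose_apply]
  refine Matrix.posSemidef_iff_dotProduct_mulVec.mpr ⟨?_, ?_⟩
  · ext p q
    rw [Matrix.conjTranspose_apply]
    simp only [Matrix.of_apply, star_sum, star_mul', hζh]
    rw [Finset.sum_comm]
    exact Finset.sum_congr rfl fun u _ => Finset.sum_congr rfl fun v _ => by rw [hXh]
  · intro x
    obtain ⟨B, hB⟩ := PaperEA.psd_eq_ct_mul hX
    have hBe : ∀ u v, X u v = ∑ j, star (B j u) * B j v := fun u v => by
      rw [hB]; simp [Matrix.mul_apply, Matrix.conjTranspose_apply]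
    have key : star x ⬝ᵥ (Matrix.of fun p q : m => ∑ u : n, ∑ v : n, X u v * ζ (p,u) (q,v)) *ᵥ x
        = ∑ j, star (fun r : m × n => x r.1 * B j r.2) ⬝ᵥ ζ *ᵥ (fun r : m × n => x r.1 * B j r.2) := by
      simp only [dotProduct, Matrix.mulVec, Matrix.of_apply, Pi.star_apply,
        Fintype.sum_prod_type, Finset.mul_sum, Finset.sum_mul, star_mul']
      trans (∑ p : m, ∑ u : n, ∑ q : m, ∑ v : n, ∑ j : n,
        star (x q) * star (B j u) * (ζ (q,u) (p,v) * (x p * B j v)))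
      · conv_lhs => rw [Finset.sum_comm]
        refine Finset.sum_congr rfl fun p _ => ?_
        conv_lhs => rw [Finset.sum_comm]
        refine Finset.sum_congr rfl fun u _ => Finset.sum_congr rfl fun q _ =>
          Finset.sum_congr rfl fun v _ => ?_
        rw [hBe u v, Finset.sum_mul, Finset.sum_mul, Finset.mul_sum]
        exact Finset.sum_congr rfl fun j _ => by ring
      · have e1 : (∑ p : m, ∑ u : n, ∑ q : m, ∑ v : n, ∑ j : n,
            star (x q) * star (B j u) * (ζ (q,u) (p,v) * (x p * B j v)))
            = ∑ q : m, ∑ u : n, ∑ p : m, ∑ v : n, ∑ j : n,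
            star (x q) * star (B j u) * (ζ (q,u) (p,v) * (x p * B j v)) :=
          calc (∑ p : m, ∑ u : n, ∑ q : m, ∑ v : n, ∑ j : n,
              star (x q) * star (B j u) * (ζ (q,u) (p,v) * (x p * B j v)))
              = ∑ p : m, ∑ q : m, ∑ u : n, ∑ v : n, ∑ j : n,
                star (x q) * star (B j u) * (ζ (q,u) (p,v) * (x p * B j v)) :=
                Finset.sum_congr rfl fun p _ => Finset.sum_comm
            _ = ∑ q : m, ∑ p : m, ∑ u : n, ∑ v : n, ∑ j : n,
                star (x q) * star (B j u) * (ζ (q,u) (p,v) * (x p * B j v)) :=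
                Finset.sum_comm
            _ = ∑ q : m, ∑ u : n, ∑ p : m, ∑ v : n, ∑ j : n,
                star (x q) * star (B j u) * (ζ (q,u) (p,v) * (x p * B j v)) :=
                Finset.sum_congr rfl fun q _ => Finset.sum_comm
        rw [e1]
        symm
        conv_lhs => rw [Finset.sum_comm]
        refine Finset.sum_congr rfl fun p _ => ?_
        conv_lhs => rw [Finset.sum_comm]
        refine Finset.sum_congr rfl fun u _ => ?_
        conv_lhs => rw [Finset.sum_comm]
        refine Finset.sum_congr rfl fun q _ => ?_
        conv_lhs => rw [Finset.sum_comm]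
    rw [key]
    exact Finset.sum_nonneg fun j _ => hζ.2 x (B j)


lemma psd_kron {m n : Type*} [Fintype m] [Fintype n]
    {σ : Matrix m m ℂ} {τ : Matrix n n ℂ} (hσ : σ.PosSemidef) (hτ : τ.PosSemidef) :
    (σ ⊗ₖ τ).PosSemidef := by
  obtain ⟨B, hB⟩ := PaperEA.psd_eq_ct_mul hσ
  obtain ⟨C, hC⟩ := PaperEA.psd_eq_ct_mul hτ
  have key : σ ⊗ₖ τ = (B ⊗ₖ C)ᴴ * (B ⊗ₖ C) := by
    rw [hB, hC, Matrix.mul_kronecker_mul]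
    congr 1
    ext p q
    simp [Matrix.conjTranspose_apply, Matrix.kroneckerMap_apply, star_mul']
  rw [key]
  exact Matrix.posSemidef_conjTranspose_mul_self _

lemma sep_posSemidef {m n : Type*} [Fintype m] [Fintype n]
    {M : Matrix (m × n) (m × n) ℂ} (h : Sep M) : M.PosSemidef := by
  obtain ⟨k, σ, τ, hσ, hτ, rfl⟩ := h
  exact Finset.sum_induction _ _ (fun A B hA hB => hA.add hB) Matrix.PosSemidef.zero
    (fun i _ => psd_kron (hσ i) (hτ i))


end
end PaperEA

/-- if the Choi matrix of `Φ` is a nonnegative combination of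
(suitably reordered) operators `ζ_BP^{A'|AB} ⊗ ρ^{B'}` and `ρ^{A'} ⊗ ζ_BP^{B'|AB}`,
then `Φ` is PEA. -/
theorem stmt_3 (a b a' b' : ℕ)
    (Φ : Matrix (Fin a × Fin b) (Fin a × Fin b) ℂ →ₗ[ℂ]
      Matrix (Fin a' × Fin b') (Fin a' × Fin b') ℂ)
    (h : ∃ (K : ℕ) (c : Fin K → ℝ)
        (M : Fin K → Matrix ((Fin a' × Fin b') × (Fin a × Fin b))
          ((Fin a' × Fin b') × (Fin a × Fin b)) ℂ),
        (∀ k, 0 ≤ c k) ∧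
        choi ⇑Φ = ∑ k, (c k : ℂ) • M k ∧
        ∀ k,
          (∃ (ζ : Matrix (Fin a' × (Fin a × Fin b)) (Fin a' × (Fin a × Fin b)) ℂ)
              (ρ : Matrix (Fin b') (Fin b') ℂ),
              BlockPositive ζ ∧ ρ.PosSemidef ∧
              M k = (ζ ⊗ₖ ρ).submatrix
                (fun p : (Fin a' × Fin b') × (Fin a × Fin b) => ((p.1.1, p.2), p.1.2))
                (fun p : (Fin a' × Fin b') × (Fin a × Fin b) => ((p.1.1, p.2), p.1.2))) ∨
          (∃ (ρ' : Matrix (Fin a') (Fin a') ℂ)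
              (ζ' : Matrix (Fin b' × (Fin a × Fin b)) (Fin b' × (Fin a × Fin b)) ℂ),
              ρ'.PosSemidef ∧ BlockPositive ζ' ∧
              M k = (ρ' ⊗ₖ ζ').submatrix
                (fun p : (Fin a' × Fin b') × (Fin a × Fin b) => (p.1.1, (p.1.2, p.2)))
                (fun p : (Fin a' × Fin b') × (Fin a × Fin b) => (p.1.1, (p.1.2, p.2))))) :
    IsPEA ⇑Φ := by
  classical
  obtain ⟨K, c, M, hc, hchoi, hM⟩ := h
  have card0 : (Fintype.card (Fin a × Fin b)) = a * b := by simp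
  have main : ∀ X : Matrix (Fin a × Fin b) (Fin a × Fin b) ℂ, X.PosSemidef → Sep (Φ X) := by
    intro X hX
    by_cases hab : a * b = 0
    · have hempty : IsEmpty (Fin a × Fin b) :=
        Fintype.card_eq_zero_iff.mp (by rw [card0]; exact hab)
      have hX0 : X = 0 := by
        ext p q; exact (hempty.false p).elim
      rw [hX0, map_zero]
      exact ⟨0, fun i => 0, fun i => 0, fun i => i.elim0, fun i => i.elim0, by simp⟩
    · set dC : ℂ := ((a * b : ℕ) : ℂ) with hdCdef
      have hdC : dC ≠ 0 := Nat.cast_ne_zero.mpr hab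
      -- decompose each M k
      have hSk : ∀ k : Fin K, ∃ (σ : Matrix (Fin a') (Fin a') ℂ) (τ : Matrix (Fin b') (Fin b') ℂ),
          σ.PosSemidef ∧ τ.PosSemidef ∧ ∀ p q : Fin a' × Fin b',
            (∑ u : Fin a × Fin b, ∑ v : Fin a × Fin b, X u v * M k (p, u) (q, v))
              = σ p.1 q.1 * τ p.2 q.2 := by
        intro k
        rcases hM k with ⟨ζ, ρ, hζ, hρ, hMk⟩ | ⟨ρ', ζ', hρ', hζ', hMk⟩
        · refine ⟨Matrix.of fun r s : Fin a' =>
              ∑ u : Fin a × Fin b, ∑ v : Fin a × Fin b, X u v * ζ (r, u) (s, v), ρ,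
            contract_psd hζ hX, hρ, fun p q => ?_⟩
          simp only [hMk, Matrix.submatrix_apply, Matrix.kroneckerMap_apply, Matrix.of_apply]
          rw [Finset.sum_mul]
          refine Finset.sum_congr rfl fun u _ => ?_
          rw [Finset.sum_mul]
          exact Finset.sum_congr rfl fun v _ => by ring
        · refine ⟨ρ', Matrix.of fun r s : Fin b' =>
              ∑ u : Fin a × Fin b, ∑ v : Fin a × Fin b, X u v * ζ' (r, u) (s, v),
            hρ', contract_psd hζ' hX, fun p q => ?_⟩
          simp only [hMk, Matrix.submatrix_apply, Matrix.kroneckerMap_apply, Matrix.of_apply]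
          rw [Finset.mul_sum]
          refine Finset.sum_congr rfl fun u _ => ?_
          rw [Finset.mul_sum]
          exact Finset.sum_congr rfl fun v _ => by ring
      choose σf τf hσf hτf hSf using hSk
      -- entrywise reconstruction of Φ X
      have hE : ∀ (u v : Fin a × Fin b) (p q : Fin a' × Fin b'),
          (Φ (single u v 1)) p q = dC * choi ⇑Φ (p, u) (q, v) := by
        intro u v p q
        show _ = dC * ((Fintype.card (Fin a × Fin b) : ℂ)⁻¹ * Φ (single u v 1) p q)
        rw [card0, ← hdCdef, ← mul_assoc, mul_inv_cancel₀ hdC, one_mul]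
      have hA : ∀ p q : Fin a' × Fin b',
          Φ X p q = ∑ u : Fin a × Fin b, ∑ v : Fin a × Fin b,
            X u v * (Φ (single u v 1)) p q := by
        intro p q
        conv_lhs => rw [Matrix.matrix_eq_sum_single X]
        rw [map_sum, Matrix.sum_apply]
        refine Finset.sum_congr rfl fun u _ => ?_
        rw [map_sum, Matrix.sum_apply]
        refine Finset.sum_congr rfl fun v _ => ?_
        have : single u v (X u v) = X u v • single u v 1 := by
          rw [Matrix.smul_single, smul_eq_mul, mul_one]
        rw [this, Φ.map_smul, Matrix.smul_apply, smul_eq_mul]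
      refine ⟨K, fun k => (((a * b : ℕ) * c k : ℝ) : ℂ) • σf k, τf,
        fun k => psd_smul_real (hσf k) (mul_nonneg (Nat.cast_nonneg _) (hc k)), hτf, ?_⟩
      ext p q
      rw [hA p q]
      have hentry : ∀ (u v : Fin a × Fin b),
          choi ⇑Φ (p, u) (q, v) = ∑ k : Fin K, (c k : ℂ) * M k (p, u) (q, v) := by
        intro u v
        rw [hchoi, Matrix.sum_apply]
        exact Finset.sum_congr rfl fun k _ => by rw [Matrix.smul_apply, smul_eq_mul]
      calc (∑ u : Fin a × Fin b, ∑ v : Fin a × Fin b,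
              X u v * (Φ (single u v 1)) p q)
          = ∑ u : Fin a × Fin b, ∑ v : Fin a × Fin b, ∑ k : Fin K,
              (dC * (c k : ℂ)) * (X u v * M k (p, u) (q, v)) := by
            refine Finset.sum_congr rfl fun u _ => Finset.sum_congr rfl fun v _ => ?_
            rw [hE u v p q, hentry u v, Finset.mul_sum, Finset.mul_sum]
            exact Finset.sum_congr rfl fun k _ => by ring
        _ = ∑ u : Fin a × Fin b, ∑ k : Fin K, ∑ v : Fin a × Fin b,
              (dC * (c k : ℂ)) * (X u v * M k (p, u) (q, v)) :=
            Finset.sum_congr rfl fun u _ => Finset.sum_comm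
        _ = ∑ k : Fin K, ∑ u : Fin a × Fin b, ∑ v : Fin a × Fin b,
              (dC * (c k : ℂ)) * (X u v * M k (p, u) (q, v)) := Finset.sum_comm
        _ = ∑ k : Fin K, (dC * (c k : ℂ)) *
              ∑ u : Fin a × Fin b, ∑ v : Fin a × Fin b, X u v * M k (p, u) (q, v) := by
            refine Finset.sum_congr rfl fun k _ => ?_
            rw [Finset.mul_sum]
            exact Finset.sum_congr rfl fun u _ => by rw [Finset.mul_sum]
        _ = ∑ k : Fin K, (dC * (c k : ℂ)) * (σf k p.1 q.1 * τf k p.2 q.2) := by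
            exact Finset.sum_congr rfl fun k _ => by rw [hSf k p q]
        _ = (∑ k : Fin K, ((((a * b : ℕ) * c k : ℝ)) : ℂ) • σf k ⊗ₖ τf k) p q := by
            rw [Matrix.sum_apply]
            refine Finset.sum_congr rfl fun k _ => ?_
            simp only [Matrix.kroneckerMap_apply, Matrix.smul_apply, smul_eq_mul]
            rw [hdCdef]
            push_cast
            ring
        _ = (∑ i : Fin K, ((fun k => (((a * b : ℕ) * c k : ℝ) : ℂ) • σf k) i) ⊗ₖ τf i) p q := by
            rw [Matrix.sum_apply, Matrix.sum_apply]
            refine Finset.sum_congr rfl fun k _ => ?_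
            simp only [Matrix.kroneckerMap_apply, Matrix.smul_apply, smul_eq_mul]
            ring
  exact ⟨fun X hX => sep_posSemidef (main X hX), fun ρ hρ => main ρ hρ.1⟩
end

section
/- Let Φ be a linear map from matrices on ℂ^{a}⊗ℂ^{b} to matrices on ℂ^{a'}⊗ℂ^{b'}, with Choi matrix Ω_Φ on (ℂ^{a'}⊗ℂ^{b'}) ⊗ (ℂ^{a}⊗ℂ^{b}). Suppose that the partial trace of Ω_Φ over the output factor ℂ^{a'}⊗ℂ^{b'} equals (ab)^{−1} I_{ab}, and that Ω_Φ is a convex combination of density operators each of which is separable either w.r.t. the cut a'|(b'ab) (first output factor versus the rest) or w.r.t. the cut b'|(a'ab) (second output factor versus the rest), after the appropriate canonical permutation of tensor factors. Then Φ is an entanglement-annihilating channel w.r.t. the output cut A|B. -/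
open Matrix Kronecker ComplexOrder BigOperators

open PaperEA

section AuxEA

open PaperEA

variable {m n : Type*} [Fintype m] [Fintype n]

lemma sum_rot {α β γ M : Type*} [Fintype α] [Fintype β] [Fintype γ] [AddCommMonoid M]
    (f : α → β → γ → M) :
    ∑ x, ∑ y, ∑ k, f x y k = ∑ k, ∑ x, ∑ y, f x y k :=
  calc ∑ x, ∑ y, ∑ k, f x y k
      = ∑ x, ∑ k, ∑ y, f x y k := Finset.sum_congr rfl fun _ _ => Finset.sum_comm
    _ = ∑ k, ∑ x, ∑ y, f x y k := Finset.sum_comm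

lemma psd_smul {M : Matrix m m ℂ} (hM : M.PosSemidef) {r : ℝ} (hr : 0 ≤ r) :
    ((r : ℂ) • M).PosSemidef := by
  refine Matrix.PosSemidef.of_dotProduct_mulVec_nonneg ?_ ?_
  · have h : ((r : ℂ) • M)ᴴ = (r : ℂ) • Mᴴ := by
      rw [conjTranspose_smul]
      congr 1
      exact Complex.conj_ofReal r
    rw [Matrix.IsHermitian, h, hM.1.eq]
  · intro x
    rw [Matrix.smul_mulVec, dotProduct_smul, smul_eq_mul]
    exact mul_nonneg (by exact_mod_cast hr) (hM.dotProduct_mulVec_nonneg x)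

lemma psd_sum {ι : Type*} [Fintype ι] (f : ι → Matrix m m ℂ) (h : ∀ i, (f i).PosSemidef) :
    (∑ i, f i).PosSemidef :=
  Finset.sum_induction f _ (fun _ _ ha hb => ha.add hb) Matrix.PosSemidef.zero
    (fun i _ => h i)

lemma sep_zero : Sep (0 : Matrix (m × n) (m × n) ℂ) :=
  ⟨0, fun i => i.elim0, fun i => i.elim0, fun i => i.elim0, fun i => i.elim0, by simp⟩

lemma sep_add {M N : Matrix (m × n) (m × n) ℂ} (hM : Sep M) (hN : Sep N) :
    Sep (M + N) := by
  obtain ⟨k1, σ1, τ1, hσ1, hτ1, h1⟩ := hM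
  obtain ⟨k2, σ2, τ2, hσ2, hτ2, h2⟩ := hN
  refine ⟨k1 + k2, Fin.addCases σ1 σ2, Fin.addCases τ1 τ2, ?_, ?_, ?_⟩
  · intro i
    refine Fin.addCases (fun i => by simpa using hσ1 i) (fun i => by simpa using hσ2 i) i
  · intro i
    refine Fin.addCases (fun i => by simpa using hτ1 i) (fun i => by simpa using hτ2 i) i
  · rw [Fin.sum_univ_add]
    simp only [Fin.addCases_left, Fin.addCases_right]
    rw [h1, h2]

lemma sep_smul {M : Matrix (m × n) (m × n) ℂ} (r : ℝ) (hr : 0 ≤ r) (hM : Sep M) :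
    Sep ((r : ℂ) • M) := by
  obtain ⟨k, σ, τ, hσ, hτ, rfl⟩ := hM
  refine ⟨k, fun i => (r : ℂ) • σ i, τ, fun i => psd_smul (hσ i) hr, hτ, ?_⟩
  rw [Finset.smul_sum]
  exact Finset.sum_congr rfl fun i _ => by rw [smul_kronecker]

lemma sep_sum {k : ℕ} {f : Fin k → Matrix (m × n) (m × n) ℂ} (h : ∀ i, Sep (f i)) :
    Sep (∑ i, f i) :=
  Finset.sum_induction f _ (fun _ _ => sep_add) sep_zero (fun i _ => h i)

lemma sum_rot4 {α β γ δ M : Type*} [Fintype α] [Fintype β] [Fintype γ] [Fintype δ]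
    [AddCommMonoid M] (f : α → β → γ → δ → M) :
    ∑ x, ∑ y, ∑ z, ∑ k, f x y z k = ∑ k, ∑ x, ∑ y, ∑ z, f x y z k :=
  calc ∑ x, ∑ y, ∑ z, ∑ k, f x y z k
      = ∑ x, ∑ k, ∑ y, ∑ z, f x y z k :=
        Finset.sum_congr rfl fun _ _ => sum_rot _
    _ = ∑ k, ∑ x, ∑ y, ∑ z, f x y z k := Finset.sum_comm

lemma sum_rot5 {α β γ δ ε M : Type*} [Fintype α] [Fintype β] [Fintype γ] [Fintype δ] [Fintype ε]
    [AddCommMonoid M] (f : α → β → γ → δ → ε → M) :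
    ∑ x, ∑ y, ∑ z, ∑ w, ∑ k, f x y z w k = ∑ k, ∑ x, ∑ y, ∑ z, ∑ w, f x y z w k :=
  calc ∑ x, ∑ y, ∑ z, ∑ w, ∑ k, f x y z w k
      = ∑ x, ∑ k, ∑ y, ∑ z, ∑ w, f x y z w k :=
        Finset.sum_congr rfl fun _ _ => sum_rot4 _
    _ = ∑ k, ∑ x, ∑ y, ∑ z, ∑ w, f x y z w k := Finset.sum_comm

lemma contract_psd {p q : Type*} [Fintype p] [Fintype q]
    {τ : Matrix (p × q) (p × q) ℂ} {ρ : Matrix q q ℂ}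
    (hτ : τ.PosSemidef) (hρ : ρ.PosSemidef) :
    (Matrix.of fun b1 b2 => ∑ x, ∑ y, ρ x y * τ (b1, x) (b2, y)).PosSemidef := by
  refine Matrix.PosSemidef.of_dotProduct_mulVec_nonneg ?_ ?_
  · apply Matrix.ext
    intro i j
    rw [Matrix.conjTranspose_apply]
    simp only [Matrix.of_apply, star_sum, star_mul']
    rw [Finset.sum_comm]
    refine Finset.sum_congr rfl fun x _ => Finset.sum_congr rfl fun y _ => ?_
    rw [hρ.1.apply, hτ.1.apply, mul_comm]
  · intro v
    obtain ⟨B, hB⟩ : ∃ B : Matrix q q ℂ, ρ = Bᴴ * B := by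
      classical
      open scoped MatrixOrder in exact CStarAlgebra.nonneg_iff_eq_star_mul_self.mp hρ.nonneg
    have key : star v ⬝ᵥ ((Matrix.of fun b1 b2 => ∑ x, ∑ y, ρ x y * τ (b1, x) (b2, y)) *ᵥ v)
        = ∑ j : q, star (fun r : p × q => v r.1 * B j r.2) ⬝ᵥ
            (τ *ᵥ fun r : p × q => v r.1 * B j r.2) := by
      calc star v ⬝ᵥ ((Matrix.of fun b1 b2 => ∑ x, ∑ y, ρ x y * τ (b1, x) (b2, y)) *ᵥ v)
          = ∑ b1, ∑ b2, ∑ x, ∑ y, ∑ j,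
              star (v b1) * ((star (B j x) * B j y) * τ (b1, x) (b2, y) * v b2) := by
            simp only [dotProduct, Matrix.mulVec, Matrix.of_apply, hB, Matrix.mul_apply,
              Matrix.conjTranspose_apply, Finset.sum_mul, Finset.mul_sum, Pi.star_apply]
        _ = ∑ j, ∑ b1, ∑ b2, ∑ x, ∑ y,
              star (v b1) * ((star (B j x) * B j y) * τ (b1, x) (b2, y) * v b2) :=
            sum_rot5 _
        _ = ∑ j : q, star (fun r : p × q => v r.1 * B j r.2) ⬝ᵥ
              (τ *ᵥ fun r : p × q => v r.1 * B j r.2) := by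
            refine Finset.sum_congr rfl fun j _ => ?_
            simp only [dotProduct, Matrix.mulVec, Fintype.sum_prod_type, Pi.star_apply,
              Finset.mul_sum, star_mul']
            refine Finset.sum_congr rfl fun b1 _ => ?_
            rw [Finset.sum_comm]
            refine Finset.sum_congr rfl fun b2 _ => Finset.sum_congr rfl fun x _ =>
              Finset.sum_congr rfl fun y _ => ?_
            ring
    rw [key]
    exact Finset.sum_nonneg fun j _ => hτ.dotProduct_mulVec_nonneg _

end AuxEA

/-- if `tr_out Ω_Φ = (ab)⁻¹ I` and `Ω_Φ` is a convex combination of density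
operators each of which is separable w.r.t. the cut `a'|(b'ab)` or w.r.t. the cut
`b'|(a'ab)` (after the appropriate reordering of tensor factors), then `Φ` is an EA
channel. -/
theorem stmt_4 (a b a' b' : ℕ)
    (Φ : Matrix (Fin a × Fin b) (Fin a × Fin b) ℂ →ₗ[ℂ]
      Matrix (Fin a' × Fin b') (Fin a' × Fin b') ℂ)
    (htp : ptrace1 (choi ⇑Φ) =
      ((a * b : ℕ) : ℂ)⁻¹ • (1 : Matrix (Fin a × Fin b) (Fin a × Fin b) ℂ))
    (h : ∃ (K : ℕ) (c : Fin K → ℝ)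
        (D : Fin K → Matrix ((Fin a' × Fin b') × (Fin a × Fin b))
          ((Fin a' × Fin b') × (Fin a × Fin b)) ℂ),
        (∀ k, 0 ≤ c k) ∧ (∑ k, c k) = 1 ∧ (∀ k, IsDensity (D k)) ∧
        (∀ k,
          Sep ((D k).submatrix
            (fun p : Fin a' × (Fin b' × (Fin a × Fin b)) => ((p.1, p.2.1), p.2.2))
            (fun p : Fin a' × (Fin b' × (Fin a × Fin b)) => ((p.1, p.2.1), p.2.2))) ∨
          Sep ((D k).submatrix
            (fun p : Fin b' × (Fin a' × (Fin a × Fin b)) => ((p.2.1, p.1), p.2.2))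
            (fun p : Fin b' × (Fin a' × (Fin a × Fin b)) => ((p.2.1, p.1), p.2.2)))) ∧
        choi ⇑Φ = ∑ k, (c k : ℂ) • D k) :
    IsChannel ⇑Φ ∧ IsEA ⇑Φ := by
  obtain ⟨K, c, D, hc0, hc1, hD, hsep, hchoi⟩ := h
  have hexp : ∀ X : Matrix (Fin a × Fin b) (Fin a × Fin b) ℂ,
      Φ X = ∑ x : Fin a × Fin b, ∑ y : Fin a × Fin b, X x y • Φ (single x y 1) := by
    intro X
    conv_lhs => rw [matrix_eq_sum_single X]
    rw [map_sum]
    refine Finset.sum_congr rfl fun x _ => ?_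
    rw [map_sum]
    refine Finset.sum_congr rfl fun y _ => ?_
    have hsb : single x y (X x y) = X x y • single x y 1 := by
      rw [smul_single, smul_eq_mul, mul_one]
    rw [hsb, Φ.map_smul]
  have hcard : (Fintype.card (Fin a × Fin b) : ℂ) = ((a * b : ℕ) : ℂ) := by simp
  have hCP : IsCP ⇑Φ := by
    show (choi ⇑Φ).PosSemidef
    rw [hchoi]
    exact psd_sum _ fun k => psd_smul (hD k).1 (hc0 k)
  have hTP : IsTP ⇑Φ := by
    intro X
    rcases isEmpty_or_nonempty (Fin a × Fin b) with he | hne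
    · have hX : X = 0 := by ext i j; exact he.elim i
      rw [hX, map_zero]
      simp [Matrix.trace]
    · have hd : ((a * b : ℕ) : ℂ) ≠ 0 := by
        rw [← hcard]
        exact_mod_cast Fintype.card_ne_zero
      have htr : ∀ k l : Fin a × Fin b,
          (Φ (single k l 1)).trace = if k = l then 1 else 0 := by
        intro k l
        have h3 := congrFun (congrFun htp k) l
        have h4 : ((a * b : ℕ) : ℂ)⁻¹ * (Φ (single k l 1)).trace
            = ((a * b : ℕ) : ℂ)⁻¹ * (if k = l then 1 else 0) := by
          simpa [ptrace1, choi, Matrix.trace, Matrix.diag, Finset.mul_sum, hcard,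
            Matrix.smul_apply, Matrix.one_apply, smul_eq_mul] using h3
        exact mul_left_cancel₀ (inv_ne_zero hd) h4
      rw [hexp X]
      simp only [Matrix.trace_sum, Matrix.trace_smul, htr, smul_eq_mul]
      simp [Matrix.trace, Matrix.diag, mul_ite, mul_one, mul_zero]
  refine ⟨⟨hCP, hTP⟩, ?_⟩
  intro ρ hρ
  have hne : Nonempty (Fin a × Fin b) := by
    rcases isEmpty_or_nonempty (Fin a × Fin b) with he | hne
    · exfalso
      have h0 : ρ.trace = 0 := by simp [Matrix.trace]
      rw [hρ.2] at h0
      exact one_ne_zero h0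
    · exact hne
  have hd : ((a * b : ℕ) : ℂ) ≠ 0 := by
    rw [← hcard]
    exact_mod_cast Fintype.card_ne_zero
  set F : Fin K → Matrix (Fin a' × Fin b') (Fin a' × Fin b') ℂ :=
    fun k => Matrix.of fun pp qq => ∑ x, ∑ y, ρ x y * D k (pp, x) (qq, y) with hF
  have entry : ∀ pp qq, Φ ρ pp qq = ((a * b : ℕ) : ℂ) * ∑ k, (c k : ℂ) * F k pp qq := by
    intro pp qq
    have h1 : Φ ρ pp qq = ∑ x, ∑ y, ρ x y * (Φ (single x y 1)) pp qq := by
      rw [hexp ρ]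
      simp [Matrix.sum_apply]
    have h2 : ∀ x y : Fin a × Fin b, (Φ (single x y 1)) pp qq
        = ((a * b : ℕ) : ℂ) * ∑ k, (c k : ℂ) * D k (pp, x) (qq, y) := by
      intro x y
      have h3 := congrFun (congrFun hchoi (pp, x)) (qq, y)
      have h3' : (Fintype.card (Fin a × Fin b) : ℂ)⁻¹ * (Φ (single x y 1)) pp qq
          = ∑ k, (c k : ℂ) * D k (pp, x) (qq, y) := by
        simpa [choi, Matrix.sum_apply, smul_eq_mul] using h3
      rw [← h3', hcard, ← mul_assoc, mul_inv_cancel₀ hd, one_mul]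
    rw [h1]
    simp only [h2, hF, Matrix.of_apply, Finset.mul_sum]
    rw [sum_rot (fun x y k => ρ x y * (((a * b : ℕ) : ℂ) * ((c k : ℂ) * D k (pp, x) (qq, y))))]
    refine Finset.sum_congr rfl fun k _ => Finset.sum_congr rfl fun x _ =>
      Finset.sum_congr rfl fun y _ => ?_
    ring
  have hΦρ : Φ ρ = (((a * b : ℕ) : ℝ) : ℂ) • ∑ k, (c k : ℂ) • F k := by
    apply Matrix.ext
    intro pp qq
    rw [entry pp qq]
    simp only [Matrix.smul_apply, Matrix.sum_apply, smul_eq_mul, Finset.mul_sum]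
    norm_cast
  rw [hΦρ]
  refine sep_smul _ (Nat.cast_nonneg _) (sep_sum fun k => sep_smul _ (hc0 k) ?_)
  rcases hsep k with hcase | hcase
  · obtain ⟨r, σ, τs, hσ, hτs, hEq⟩ := hcase
    have hDk : ∀ (a1 a2 : Fin a') (b1 b2 : Fin b') (x y : Fin a × Fin b),
        D k ((a1, b1), x) ((a2, b2), y) = ∑ i, σ i a1 a2 * τs i (b1, x) (b2, y) := by
      intro a1 a2 b1 b2 x y
      have := congrFun (congrFun hEq (a1, (b1, x))) (a2, (b2, y))
      simpa [Matrix.sum_apply, Matrix.submatrix_apply, Matrix.kroneckerMap_apply] using this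
    refine ⟨r, σ, fun i => Matrix.of fun c1 c2 => ∑ x, ∑ y, ρ x y * τs i (c1, x) (c2, y),
      hσ, fun i => contract_psd (hτs i) hρ.1, ?_⟩
    apply Matrix.ext
    rintro ⟨a1, b1⟩ ⟨a2, b2⟩
    simp only [hF, Matrix.of_apply, Matrix.sum_apply, Matrix.kroneckerMap_apply, hDk,
      Finset.mul_sum, Finset.sum_mul]
    rw [sum_rot (fun x y i => ρ x y * (σ i a1 a2 * τs i (b1, x) (b2, y)))]
    refine Finset.sum_congr rfl fun i _ => Finset.sum_congr rfl fun x _ =>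
      Finset.sum_congr rfl fun y _ => ?_
    ring
  · obtain ⟨r, σ, τs, hσ, hτs, hEq⟩ := hcase
    have hDk : ∀ (a1 a2 : Fin a') (b1 b2 : Fin b') (x y : Fin a × Fin b),
        D k ((a1, b1), x) ((a2, b2), y) = ∑ i, σ i b1 b2 * τs i (a1, x) (a2, y) := by
      intro a1 a2 b1 b2 x y
      have := congrFun (congrFun hEq (b1, (a1, x))) (b2, (a2, y))
      simpa [Matrix.sum_apply, Matrix.submatrix_apply, Matrix.kroneckerMap_apply] using this
    refine ⟨r, fun i => Matrix.of fun c1 c2 => ∑ x, ∑ y, ρ x y * τs i (c1, x) (c2, y), σ,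
      fun i => contract_psd (hτs i) hρ.1, hσ, ?_⟩
    apply Matrix.ext
    rintro ⟨a1, b1⟩ ⟨a2, b2⟩
    simp only [hF, Matrix.of_apply, Matrix.sum_apply, Matrix.kroneckerMap_apply, hDk,
      Finset.mul_sum, Finset.sum_mul]
    rw [sum_rot (fun x y i => ρ x y * (σ i b1 b2 * τs i (a1, x) (a2, y)))]
    refine Finset.sum_congr rfl fun i _ => Finset.sum_congr rfl fun x _ =>
      Finset.sum_congr rfl fun y _ => ?_
    ring
end
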